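/- There exists a sequence ε_k → 0 such that for every k ≥ 1 and every binary string x of length 2^k, the number of distinct strings in the dyadic substring set S(x) is at most 2^k(2+ε_k)/k. (Liaw–Lin bound on the size of the quasi-reduced OBDD.) -/

import Mathlib

/-- The dyadic substring set `S(x)` of a binary string `x` of length `2^k`. -/
def dyadicSet (k : ℕ) (x : List Bool) : Finset (List Bool) :=
  (Finset.range (k + 1)).biUnion fun i =>
    (Finset.range (2 ^ (k - i))).image fun j => (x.drop (j * 2 ^ i)).take (2 ^ i)

private lemma sum_two_pow (n : ℕ) : ∑ i ∈ Finset.range n, 2 ^ i = 2 ^ n - 1 := by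
  induction n with
  | zero => simp
  | succ n ih =>
    rw [Finset.sum_range_succ, ih]
    have h1 : 1 ≤ 2 ^ n := Nat.one_le_two_pow
    have h2 : 2 ^ (n+1) = 2 * 2^n := by rw [pow_succ]; ring
    omega

private lemma card_of_length (L : ℕ) (s : Finset (List Bool)) (h : ∀ l ∈ s, l.length = L) :
    s.card ≤ 2 ^ L := by
  have hcard : s.card ≤ (Finset.univ : Finset (Fin L → Bool)).card := by
    apply Finset.card_le_card_of_injOn (fun l (i : Fin L) => l.getD i.val false)
      (fun l _ => Finset.mem_univ _)
    intro l1 h1 l2 h2 heq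
    have hl1 := h l1 h1
    have hl2 := h l2 h2
    apply List.ext_getElem (by rw [hl1, hl2])
    intro i hi1 hi2
    have hi : i < L := by rwa [hl1] at hi1
    have h5 := congrFun heq ⟨i, hi⟩
    simp only at h5
    rwa [List.getD_eq_getElem _ _ hi1, List.getD_eq_getElem _ _ hi2] at h5
  simpa using hcard

private lemma upper_sum (m k : ℕ) (h : m ≤ k) :
    ∑ i ∈ Finset.Ico m (k+1), 2 ^ (k - i) = 2 ^ (k + 1 - m) - 1 := by
  rw [Finset.sum_Ico_eq_sum_range (f := fun i => 2 ^ (k - i)) m (k+1)]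
  have hc : ∀ j ∈ Finset.range (k+1-m), 2 ^ (k - (m + j)) = 2 ^ ((k+1-m) - 1 - j) := by
    intro j hj
    congr 1
    have := Finset.mem_range.mp hj
    omega
  rw [Finset.sum_congr rfl hc, Finset.sum_range_reflect (fun j => 2^j) (k+1-m), sum_two_pow]

private lemma lower_sum : ∀ c : ℕ, 1 ≤ c → ∑ i ∈ Finset.range c, 2 ^ 2 ^ i ≤ 2 ^ (2 ^ (c-1) + 1) := by
  intro c
  induction c with
  | zero => omega
  | succ c ih =>
    intro _
    rcases Nat.eq_zero_or_pos c with rfl | hc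
    · simp
    · rw [Finset.sum_range_succ]
      have h1 := ih hc
      have h2 : 2 ^ (c-1) + 1 ≤ 2 ^ c := by
        have h3 : (1:ℕ) ≤ 2^(c-1) := Nat.one_le_two_pow
        have h4 : 2^c = 2 * 2^(c-1) := by
          rw [← pow_succ']
          congr 1
          omega
        omega
      have h5 : (2:ℕ)^(2^(c-1)+1) ≤ 2^(2^c) := Nat.pow_le_pow_right (by norm_num) h2
      have h6 : (2:ℕ)^(2^c) + 2^(2^c) = 2^(2^c+1) := by rw [pow_succ]; ring
      simp only [Nat.add_sub_cancel]
      omega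

private lemma sq_le_two_pow : ∀ c : ℕ, 4 ≤ c → c * c ≤ 2 ^ c := by
  intro c
  induction c with
  | zero => omega
  | succ c ih =>
    intro h
    rcases Nat.lt_or_ge c 4 with h4 | h4
    · have hc3 : c = 3 := by omega
      subst hc3
      norm_num
    · have h1 := ih h4
      have h2 : (2:ℕ)^(c+1) = 2 * 2^c := by rw [pow_succ]; ring
      nlinarith

private lemma level_card (k i : ℕ) (hik : i ≤ k) (x : List Bool) (hx : x.length = 2 ^ k) :
    ((Finset.range (2 ^ (k - i))).image fun j => (x.drop (j * 2 ^ i)).take (2 ^ i)).card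
      ≤ min (2 ^ (k - i)) (2 ^ 2 ^ i) := by
  refine le_min ?_ ?_
  · exact Finset.card_image_le.trans (le_of_eq (Finset.card_range _))
  · apply card_of_length
    intro l hl
    simp only [Finset.mem_image, Finset.mem_range] at hl
    obtain ⟨j, hj, rfl⟩ := hl
    have hmul : (j + 1) * 2 ^ i ≤ 2 ^ k := by
      calc (j+1) * 2^i ≤ 2^(k-i) * 2^i := Nat.mul_le_mul_right _ hj
        _ = 2 ^ k := by rw [← pow_add, Nat.sub_add_cancel hik]
    have h1 : j * 2^i + 2^i ≤ 2^k := by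
      have : (j+1) * 2^i = j * 2^i + 2^i := by ring
      omega
    simp only [List.length_take, List.length_drop, hx]
    omega

private lemma card_le_B (k : ℕ) (x : List Bool) (hx : x.length = 2 ^ k) :
    (dyadicSet k x).card ≤ ∑ i ∈ Finset.range (k+1), min (2 ^ (k - i)) (2 ^ 2 ^ i) := by
  refine Finset.card_biUnion_le.trans (Finset.sum_le_sum fun i hi => ?_)
  exact level_card k i (Nat.lt_succ_iff.mp (Finset.mem_range.mp hi)) x hx

private lemma main_est (k : ℕ) (hk : 1024 ≤ k) (c : ℕ)
    (hPc : ¬ k - c < 2 ^ c) (hm : k - (c+1) < 2 ^ (c+1)) :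
    (2^(2^(c-1)+1) + 2^(2^c) + 2^(k-c)) * (Nat.sqrt k * k) ≤ 2 ^ k * (2 * Nat.sqrt k + 24) := by
  set d := Nat.sqrt k with hd
  set a := 2^c with ha
  set b := 2^(c-1) with hb
  set n := k - c with hn
  have hd32 : 32 ≤ d := Nat.le_sqrt.mpr (by omega)
  have hdk : d * d ≤ k := Nat.sqrt_le k
  have ha1 : 1 ≤ a := Nat.one_le_two_pow
  have han : a ≤ n := by omega
  have hck : c < k := by omega
  have h2a : (2:ℕ)^(c+1) = 2 * a := by rw [ha, pow_succ]; ring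
  have hn2a : n ≤ 2 * a := by omega
  have hc9 : 9 ≤ c := by
    by_contra hcon
    have h8 : c + 1 ≤ 9 := by omega
    have h9 : (2:ℕ)^(c+1) ≤ 2^9 := Nat.pow_le_pow_right (by norm_num) h8
    have h512 : (2:ℕ)^9 = 512 := by norm_num
    omega
  have hcsq : c * c ≤ a := by
    rw [ha]; exact sq_le_two_pow c (by omega)
  have hcd : c ≤ d := Nat.le_sqrt.mpr (by omega)
  have h32d : 32 * d ≤ d * d := by nlinarith
  have hdn : d ≤ n := by omega
  have hk2n : k ≤ 2 * n := by omega
  have h4a : k ≤ 4 * a := by omega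
  have h8d : 8 * d ≤ a := by omega
  have hba : 2 * b = a := by
    rw [hb, ha, ← pow_succ']
    congr 1
    omega
  have hk2 : (2:ℕ)^k = a * 2^n := by
    rw [ha, ← pow_add]
    congr 1
    omega
  have e1 : b + 1 + d ≤ n := by omega
  have e2 : (2:ℕ)^(b+1) * 2^d ≤ 2^n := by
    rw [← pow_add]; exact Nat.pow_le_pow_right (by norm_num) e1
  have e31 : d ≤ 2^d := (Nat.lt_two_pow_self (n := d)).le
  have hknc : k = n + c := by omega
  clear_value d a b n
  have e3 : d * k ≤ 8 * (a * 2^d) := by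
    calc d * k ≤ 2^d * k := Nat.mul_le_mul_right k e31
      _ ≤ 2^d * (4*a) := Nat.mul_le_mul le_rfl h4a
      _ = 4 * (a * 2^d) := by ring
      _ ≤ 8 * (a * 2^d) := Nat.mul_le_mul_right _ (by norm_num)
  have p1 : (2:ℕ)^(b+1) * (d * k) ≤ 8 * (a * 2^n) := by
    calc (2:ℕ)^(b+1) * (d * k) ≤ 2^(b+1) * (8 * (a * 2^d)) := Nat.mul_le_mul le_rfl e3
      _ = 8 * a * (2^(b+1) * 2^d) := by ring
      _ ≤ 8 * a * 2^n := Nat.mul_le_mul le_rfl e2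
      _ = 8 * (a * 2^n) := by ring
  rcases Nat.lt_or_ge n (a + d) with hcase | hcase
  · -- Case B : n < a + d
    rcases Nat.lt_or_ge a n with ht | ht
    · -- a < n
      have h2a2n : 2 * (2:ℕ)^a ≤ 2^n := by
        have h' : (2:ℕ)^(a+1) ≤ 2^n := Nat.pow_le_pow_right (by norm_num) (by omega)
        rw [pow_succ] at h'
        omega
      have h3k4a : 3 * k ≤ 4 * a := by omega
      have p23 : ((2:ℕ)^a + 2^n) * (d * k) ≤ 2 * d * (a * 2^n) := by
        have q0 : 2 * ((2:ℕ)^a + 2^n) ≤ 3 * 2^n := by omega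
        have q1 : 2 * (((2:ℕ)^a + 2^n) * (d * k)) ≤ 3 * 2^n * (d * k) := by
          calc 2 * (((2:ℕ)^a + 2^n) * (d * k)) = (2 * ((2:ℕ)^a + 2^n)) * (d * k) := by ring
            _ ≤ 3 * 2^n * (d * k) := Nat.mul_le_mul_right _ q0
        have q2 : 3 * (2:ℕ)^n * (d * k) ≤ 2 * (2 * d * (a * 2^n)) := by
          calc 3 * (2:ℕ)^n * (d * k) = (2^n * d) * (3 * k) := by ring
            _ ≤ (2^n * d) * (4 * a) := Nat.mul_le_mul le_rfl h3k4a
            _ = 2 * (2 * d * (a * 2^n)) := by ring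
        omega
      calc ((2:ℕ)^(b+1) + 2^a + 2^n) * (d * k)
          = 2^(b+1) * (d * k) + (2^a + 2^n) * (d * k) := by ring
        _ ≤ 8 * (a * 2^n) + 2 * d * (a * 2^n) := Nat.add_le_add p1 p23
        _ = (2 * d + 8) * (a * 2^n) := by ring
        _ ≤ (2 * d + 24) * (a * 2^n) := Nat.mul_le_mul_right _ (by omega)
        _ = 2^k * (2 * d + 24) := by rw [hk2]; ring
    · -- a = n
      have haeq : a = n := by omega
      have hdk2 : d * k ≤ (d + 8) * n := by
        have q1 : d * c ≤ d * d := Nat.mul_le_mul le_rfl hcd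
        have q2 : d * k = d * n + d * c := by rw [hknc]; ring
        have q3 : (d + 8) * n = d * n + 8 * n := by ring
        omega
      have p23 : ((2:ℕ)^a + 2^n) * (d * k) ≤ (2 * d + 16) * (a * 2^n) := by
        rw [haeq]
        calc ((2:ℕ)^n + 2^n) * (d * k) = 2 * 2^n * (d * k) := by ring
          _ ≤ 2 * 2^n * ((d + 8) * n) := Nat.mul_le_mul le_rfl hdk2
          _ = (2 * d + 16) * (n * 2^n) := by ring
      calc ((2:ℕ)^(b+1) + 2^a + 2^n) * (d * k)
          = 2^(b+1) * (d * k) + (2^a + 2^n) * (d * k) := by ring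
        _ ≤ 8 * (a * 2^n) + (2 * d + 16) * (a * 2^n) := by
            refine Nat.add_le_add p1 (p23.trans ?_)
            rw [haeq]
        _ = (2 * d + 24) * (a * 2^n) := by ring
        _ = 2^k * (2 * d + 24) := by rw [hk2]; ring
  · -- Case A : a + d ≤ n
    have eA : (2:ℕ)^a * 2^d ≤ 2^n := by
      rw [← pow_add]; exact Nat.pow_le_pow_right (by norm_num) hcase
    have p2 : (2:ℕ)^a * (d * k) ≤ 8 * (a * 2^n) := by
      calc (2:ℕ)^a * (d * k) ≤ 2^a * (8 * (a * 2^d)) := Nat.mul_le_mul le_rfl e3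
        _ = 8 * a * (2^a * 2^d) := by ring
        _ ≤ 8 * a * 2^n := Nat.mul_le_mul le_rfl eA
        _ = 8 * (a * 2^n) := by ring
    have pA2 : d * k ≤ a * (2 * d + 4) := by
      have q1 : d * c ≤ d * d := Nat.mul_le_mul le_rfl hcd
      have q2 : d * k = d * n + d * c := by rw [hknc]; ring
      have q3 : d * n ≤ d * (2 * a) := Nat.mul_le_mul le_rfl hn2a
      have q4 : d * (2 * a) = 2 * (a * d) := by ring
      have q5 : a * (2 * d + 4) = 2 * (a * d) + 4 * a := by ring
      omega
    have p3 : (2:ℕ)^n * (d * k) ≤ (2 * d + 4) * (a * 2^n) := by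
      calc (2:ℕ)^n * (d * k) ≤ 2^n * (a * (2 * d + 4)) := Nat.mul_le_mul le_rfl pA2
        _ = (2 * d + 4) * (a * 2^n) := by ring
    calc ((2:ℕ)^(b+1) + 2^a + 2^n) * (d * k)
        = 2^(b+1) * (d * k) + 2^a * (d * k) + 2^n * (d * k) := by ring
      _ ≤ 8 * (a * 2^n) + 8 * (a * 2^n) + (2 * d + 4) * (a * 2^n) :=
        Nat.add_le_add (Nat.add_le_add p1 p2) p3
      _ = (2 * d + 20) * (a * 2^n) := by ring
      _ ≤ (2 * d + 24) * (a * 2^n) := Nat.mul_le_mul_right _ (by omega)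
      _ = 2^k * (2 * d + 24) := by rw [hk2]; ring

private lemma sum_min_split (k c : ℕ) (hc1 : 1 ≤ c) (hck : c + 1 ≤ k)
    (hPc : ¬ k - c < 2^c) :
    ∑ i ∈ Finset.range (k+1), min (2^(k-i)) (2^(2^i))
      ≤ 2^(2^(c-1)+1) + 2^(2^c) + 2^(k-c) := by
  have hm1 : c + 1 ≤ k + 1 := by omega
  have hsplit0 : ∑ i ∈ Finset.range (k+1), min (2^(k-i)) (2^(2^i))
      = ∑ i ∈ Finset.Ico 0 (c+1), min (2^(k-i)) (2^(2^i))
        + ∑ i ∈ Finset.Ico (c+1) (k+1), min (2^(k-i)) (2^(2^i)) := by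
    rw [Finset.sum_Ico_consecutive _ (Nat.zero_le (c+1)) hm1, ← Finset.range_eq_Ico]
  have hlow : ∑ i ∈ Finset.Ico 0 (c+1), min (2^(k-i)) (2^(2^i)) ≤ 2^(2^(c-1)+1) + 2^(2^c) := by
    calc ∑ i ∈ Finset.Ico 0 (c+1), min (2^(k-i)) (2^(2^i))
        ≤ ∑ i ∈ Finset.Ico 0 (c+1), 2^(2^i) := Finset.sum_le_sum fun i _ => min_le_right _ _
      _ = ∑ i ∈ Finset.range c, 2^(2^i) + 2^(2^c) := by
          rw [← Finset.range_eq_Ico, Finset.sum_range_succ]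
      _ ≤ 2^(2^(c-1)+1) + 2^(2^c) := by
          have := lower_sum c hc1
          omega
  have hup : ∑ i ∈ Finset.Ico (c+1) (k+1), min (2^(k-i)) (2^(2^i)) ≤ 2^(k-c) := by
    calc ∑ i ∈ Finset.Ico (c+1) (k+1), min (2^(k-i)) (2^(2^i))
        ≤ ∑ i ∈ Finset.Ico (c+1) (k+1), 2^(k-i) := Finset.sum_le_sum fun i _ => min_le_left _ _
      _ = 2^(k+1-(c+1)) - 1 := upper_sum (c+1) k hck
      _ ≤ 2^(k-c) := by
          have h' : k+1-(c+1) = k-c := by omega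
          rw [h']
          exact Nat.sub_le _ _
  rw [hsplit0]
  exact Nat.add_le_add hlow hup

private lemma tendsto_aux :
    Filter.Tendsto (fun k : ℕ => if k < 1024 then (2*k : ℝ) else 24 / (Nat.sqrt k : ℝ))
      Filter.atTop (nhds 0) := by
  have hsq : Filter.Tendsto (fun k : ℕ => (Nat.sqrt k : ℝ)) Filter.atTop Filter.atTop := by
    apply tendsto_natCast_atTop_atTop.comp
    apply Filter.tendsto_atTop_atTop.mpr
    intro b
    exact ⟨b*b, fun a ha => le_trans (le_of_eq (Nat.sqrt_eq b).symm) (Nat.sqrt_le_sqrt ha)⟩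
  have h1 : Filter.Tendsto (fun k : ℕ => 24 / (Nat.sqrt k : ℝ)) Filter.atTop (nhds 0) :=
    Filter.Tendsto.div_atTop tendsto_const_nhds hsq
  apply h1.congr'
  filter_upwards [Filter.eventually_ge_atTop 1024] with k hk
  rw [if_neg (by omega)]

/-- (Liaw–Lin) There is a sequence `ε_k → 0` such that for every `k ≥ 1` and every
binary string `x` of length `2^k`, the number of distinct strings in the dyadic
substring set `S(x)` is at most `2^k(2+ε_k)/k`. -/
theorem dyadicSet_card_le_liaw_lin :
    ∃ ε : ℕ → ℝ, Filter.Tendsto ε Filter.atTop (nhds 0) ∧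
      ∀ k : ℕ, 1 ≤ k → ∀ x : List Bool, x.length = 2 ^ k →
        ((dyadicSet k x).card : ℝ) ≤ (2 : ℝ) ^ k * (2 + ε k) / (k : ℝ) := by
  refine ⟨fun k => if k < 1024 then (2*k : ℝ) else 24 / (Nat.sqrt k : ℝ), tendsto_aux, ?_⟩
  intro k hk x hx
  beta_reduce
  have hB := card_le_B k x hx
  have hkR : (0:ℝ) < (k:ℝ) := by exact_mod_cast hk
  by_cases hsmall : k < 1024
  · rw [if_pos hsmall]
    have htriv : (dyadicSet k x).card ≤ 2^(k+1) := by
      have h1 : ∑ i ∈ Finset.range (k+1), min (2^(k-i)) (2^(2^i))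
          ≤ ∑ i ∈ Finset.range (k+1), 2^(k-i) :=
        Finset.sum_le_sum fun i _ => min_le_left _ _
      have h2 : ∑ i ∈ Finset.range (k+1), 2^(k-i) = 2^(k+1) - 1 := by
        have h3 := upper_sum 0 k (Nat.zero_le k)
        rw [Finset.range_eq_Ico]
        simpa using h3
      have h4 : 1 ≤ 2^(k+1) := Nat.one_le_two_pow
      omega
    have hnat : (dyadicSet k x).card * k ≤ 2^k * (2 + 2*k) := by
      calc (dyadicSet k x).card * k ≤ 2^(k+1) * k := Nat.mul_le_mul_right _ htriv
        _ = 2^k * (2*k) := by rw [pow_succ]; ring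
        _ ≤ 2^k * (2 + 2*k) := Nat.mul_le_mul le_rfl (by omega)
    rw [le_div_iff₀ hkR]
    calc ((dyadicSet k x).card : ℝ) * k
        = (((dyadicSet k x).card * k : ℕ) : ℝ) := by push_cast; ring
      _ ≤ ((2^k * (2 + 2*k) : ℕ) : ℝ) := by exact_mod_cast hnat
      _ = (2:ℝ)^k * (2 + 2*(k:ℝ)) := by push_cast; ring
  · rw [if_neg hsmall]
    push_neg at hsmall
    have hex : ∃ i, k - i < 2^i := ⟨k, by have := Nat.one_le_two_pow (n := k); omega⟩
    have hm : k - Nat.find hex < 2 ^ Nat.find hex := Nat.find_spec hex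
    have hm1 : 1 ≤ Nat.find hex := by
      rcases Nat.eq_zero_or_pos (Nat.find hex) with h0 | h
      · exfalso
        rw [h0] at hm
        simp at hm
        omega
      · exact h
    set c := Nat.find hex - 1 with hc
    have hPc : ¬ (k - c < 2^c) := Nat.find_min hex (by omega)
    have hmc : Nat.find hex = c + 1 := by omega
    rw [hmc] at hm
    have hc1 : 1 ≤ c := by
      by_contra hcon
      have h0 : c = 0 := by omega
      rw [h0] at hm
      norm_num at hm
      omega
    have hck : c + 1 ≤ k := by
      have := Nat.one_le_two_pow (n := c)
      omega
    have hsum := sum_min_split k c hc1 hck hPc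
    have hmain := main_est k hsmall c hPc hm
    have hnat : (dyadicSet k x).card * (Nat.sqrt k * k) ≤ 2^k * (2 * Nat.sqrt k + 24) :=
      le_trans (Nat.mul_le_mul_right _ (le_trans hB hsum)) hmain
    have hd32 : 32 ≤ Nat.sqrt k := Nat.le_sqrt.mpr (by omega)
    have hdR : (0:ℝ) < (Nat.sqrt k : ℝ) := by exact_mod_cast (by omega : 0 < Nat.sqrt k)
    rw [le_div_iff₀ hkR]
    have key : ((dyadicSet k x).card : ℝ) * k * (Nat.sqrt k : ℝ)
        ≤ (2:ℝ)^k * (2*(Nat.sqrt k : ℝ) + 24) := by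
      calc ((dyadicSet k x).card : ℝ) * k * (Nat.sqrt k : ℝ)
          = (((dyadicSet k x).card * (Nat.sqrt k * k) : ℕ) : ℝ) := by push_cast; ring
        _ ≤ ((2^k * (2 * Nat.sqrt k + 24) : ℕ) : ℝ) := by exact_mod_cast hnat
        _ = (2:ℝ)^k * (2*(Nat.sqrt k : ℝ) + 24) := by push_cast; ring
    have h2 : (2:ℝ)^k * (2 + 24/(Nat.sqrt k : ℝ))
        = ((2:ℝ)^k * (2*(Nat.sqrt k : ℝ) + 24))/(Nat.sqrt k : ℝ) := by
      field_simp
    rw [h2, le_div_iff₀ hdR]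
    exact key
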